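/- arXiv:2205.15160 — 8 statements merged into one kernel-verified Lean document; each statement's English description precedes it below -/
import Mathlib

section
/- Let t ≥ 2 and let G be a (4P_1, complement of (K_{2,t} + P_1))-free graph with three pairwise non-adjacent vertices v_a, v_b, v_c, and let S_p, S_q (for distinct p, q ∈ {a, b, c}) be the sets of private neighbours of v_p, v_q respectively with respect to {v_a, v_b, v_c} (so S_p and S_q are cliques, v_p is complete to S_p and anticomplete to S_q, and v_q is complete to S_q and anticomplete to S_p). If some vertex x ∈ S_p has two distinct neighbours y_1, y_2 in S_q, then there are at most t − 1 vertices in S_p anticomplete to {y_1, y_2}. -/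
open SimpleGraph

/-- `G` contains an induced copy of the complement of `K_{2,t} + P₁`: a universal vertex `w`
together with a clique `{a₁, a₂}` of size 2 and a clique `B` of size `t`, disjoint and
anticomplete to each other. -/
def HasCoK2tP1 {V : Type} (G : SimpleGraph V) (t : ℕ) : Prop :=
  ∃ (w a₁ a₂ : V) (B : Finset V),
    B.card = t ∧ a₁ ≠ a₂ ∧ G.Adj a₁ a₂ ∧
    w ∉ B ∧ a₁ ∉ B ∧ a₂ ∉ B ∧ w ≠ a₁ ∧ w ≠ a₂ ∧
    G.Adj w a₁ ∧ G.Adj w a₂ ∧ (∀ b ∈ B, G.Adj w b) ∧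
    (∀ b ∈ B, ∀ b' ∈ B, b ≠ b' → G.Adj b b') ∧
    (∀ b ∈ B, ¬ G.Adj a₁ b ∧ ¬ G.Adj a₂ b)

lemma four_nonadj {V : Type} {G : SimpleGraph V} (h : Gᶜ.CliqueFree 4)
    (a b c d : V) (hab : a ≠ b) (hac : a ≠ c) (had : a ≠ d) (hbc : b ≠ c)
    (hbd : b ≠ d) (hcd : c ≠ d)
    (nab : ¬G.Adj a b) (nac : ¬G.Adj a c) (nad : ¬G.Adj a d)
    (nbc : ¬G.Adj b c) (nbd : ¬G.Adj b d) (ncd : ¬G.Adj c d) : False := by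
  classical
  have nba : ¬G.Adj b a := fun h' => nab h'.symm
  have nca : ¬G.Adj c a := fun h' => nac h'.symm
  have nda : ¬G.Adj d a := fun h' => nad h'.symm
  have ncb : ¬G.Adj c b := fun h' => nbc h'.symm
  have ndb : ¬G.Adj d b := fun h' => nbd h'.symm
  have ndc : ¬G.Adj d c := fun h' => ncd h'.symm
  apply h {a, b, c, d}
  constructor
  · intro u hu v hv huv
    simp only [Finset.coe_insert, Set.mem_insert_iff, Finset.coe_singleton,
      Set.mem_singleton_iff] at hu hv
    rw [compl_adj]
    refine ⟨huv, ?_⟩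
    rcases hu with rfl | rfl | rfl | rfl <;> rcases hv with rfl | rfl | rfl | rfl <;>
      first | exact absurd rfl huv | assumption
  · rw [Finset.card_insert_of_notMem (by simp [hab, hac, had]),
      Finset.card_insert_of_notMem (by simp [hbc, hbd]),
      Finset.card_insert_of_notMem (by simp [hcd]), Finset.card_singleton]

theorem stmt7 {V : Type} (G : SimpleGraph V) (t : ℕ) (ht : 2 ≤ t)
    (h4P1free : Gᶜ.CliqueFree 4)
    (hfree : ¬ HasCoK2tP1 G t)
    (va vb vc : V)
    (hab : va ≠ vb) (hbc : vb ≠ vc) (hac : va ≠ vc)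
    (nab : ¬ G.Adj va vb) (nbc : ¬ G.Adj vb vc) (nac : ¬ G.Adj va vc)
    -- the sets of private neighbours of `va` and `vb` w.r.t. `{va, vb, vc}`
    (Sp Sq : Set V)
    (hSp : Sp = {x : V | x ≠ va ∧ x ≠ vb ∧ x ≠ vc ∧
        G.Adj x va ∧ ¬ G.Adj x vb ∧ ¬ G.Adj x vc})
    (hSq : Sq = {x : V | x ≠ va ∧ x ≠ vb ∧ x ≠ vc ∧
        G.Adj x vb ∧ ¬ G.Adj x va ∧ ¬ G.Adj x vc})
    (x : V) (hx : x ∈ Sp)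
    (y₁ y₂ : V) (hy₁ : y₁ ∈ Sq) (hy₂ : y₂ ∈ Sq) (hy : y₁ ≠ y₂)
    (hxy₁ : G.Adj x y₁) (hxy₂ : G.Adj x y₂) :
    {z : V | z ∈ Sp ∧ ¬ G.Adj z y₁ ∧ ¬ G.Adj z y₂}.ncard ≤ t - 1 := by
  -- Sp is a clique
  have hSpClique : ∀ z ∈ Sp, ∀ z' ∈ Sp, z ≠ z' → G.Adj z z' := by
    intro z hz z' hz' hne
    by_contra hadj
    rw [hSp] at hz hz'
    obtain ⟨-, hzb, hzc, -, nzb, nzc⟩ := hz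
    obtain ⟨-, hzb', hzc', -, nzb', nzc'⟩ := hz'
    exact four_nonadj h4P1free z z' vb vc hne hzb hzc hzb' hzc' hbc
      hadj nzb nzc nzb' nzc' nbc
  -- Sq is a clique
  have hSqClique : ∀ z ∈ Sq, ∀ z' ∈ Sq, z ≠ z' → G.Adj z z' := by
    intro z hz z' hz' hne
    by_contra hadj
    rw [hSq] at hz hz'
    obtain ⟨hza, -, hzc, -, nza, nzc⟩ := hz
    obtain ⟨hza', -, hzc', -, nza', nzc'⟩ := hz'
    exact four_nonadj h4P1free z z' va vc hne hza hzc hza' hzc' hac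
      hadj nza nzc nza' nzc' nac
  set S := {z : V | z ∈ Sp ∧ ¬ G.Adj z y₁ ∧ ¬ G.Adj z y₂} with hS
  by_contra hcon
  push_neg at hcon
  have ht1 : t ≤ S.ncard := by omega
  have hfin : S.Finite := by
    by_contra hinf
    rw [Set.Infinite.ncard hinf] at hcon
    omega
  obtain ⟨B, hBsub, hBcard⟩ :=
    Finset.exists_subset_card_eq
      ((Set.ncard_eq_toFinset_card S hfin) ▸ ht1 : t ≤ hfin.toFinset.card)
  apply hfree
  have hBmem : ∀ b ∈ B, b ∈ S := fun b hb => hfin.mem_toFinset.mp (hBsub hb)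
  have hy₁y₂ : G.Adj y₁ y₂ := hSqClique y₁ hy₁ y₂ hy₂ hy
  have hy₁Sp : y₁ ∉ Sp := by
    rw [hSp]; rw [hSq] at hy₁
    intro h'; exact h'.2.2.2.2.1 hy₁.2.2.2.1
  have hy₂Sp : y₂ ∉ Sp := by
    rw [hSp]; rw [hSq] at hy₂
    intro h'; exact h'.2.2.2.2.1 hy₂.2.2.2.1
  have hxB : x ∉ B := by
    intro h'; exact (hBmem x h').2.1 hxy₁
  refine ⟨x, y₁, y₂, B, hBcard, hy, hy₁y₂, hxB, ?_, ?_, ?_, ?_, hxy₁, hxy₂, ?_, ?_, ?_⟩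
  · intro h'; exact hy₁Sp (hBmem y₁ h').1
  · intro h'; exact hy₂Sp (hBmem y₂ h').1
  · rintro rfl; exact hxy₁.ne rfl
  · rintro rfl; exact hxy₂.ne rfl
  · intro b hb
    exact hSpClique x hx b (hBmem b hb).1 (fun h' => hxB (h' ▸ hb))
  · intro b hb b' hb' hne
    exact hSpClique b (hBmem b hb).1 b' (hBmem b' hb').1 hne
  · intro b hb
    exact ⟨fun h' => (hBmem b hb).2.1 h'.symm, fun h' => (hBmem b hb).2.2 h'.symm⟩
end

section
/- Let G be a graph that is vertex-partitioned into six independent sets A, B, C, D, E, F where R = A ∪ B ∪ C and S = D ∪ E ∪ F, every vertex of R has at most one neighbour in each of D, E, F, and every vertex of S has at most one neighbour in each of A, B, C. Let G' be obtained from G by adding all edges between distinct classes among {A, B, C} and all edges between distinct classes among {D, E, F}. Then G' contains no induced subgraph isomorphic to P_3 + P_2 + P_1 (the disjoint union of a path on three vertices, an edge, and an isolated vertex). -/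
open SimpleGraph

def IndepIn {V : Type} (G : SimpleGraph V) (S : Set V) : Prop :=
  ∀ u ∈ S, ∀ v ∈ S, ¬ G.Adj u v

def BetweenSets {V : Type} (u v : V) (S T : Set V) : Prop :=
  (u ∈ S ∧ v ∈ T) ∨ (u ∈ T ∧ v ∈ S)

/-- `f` is an induced copy in `G` of the pattern graph on `Fin n` with edge set `E`. -/
def IsInducedPattern {V : Type} (G : SimpleGraph V) {n : ℕ}
    (E : Set (Sym2 (Fin n))) (f : Fin n → V) : Prop :=
  Function.Injective f ∧ ∀ i j : Fin n, G.Adj (f i) (f j) ↔ s(i, j) ∈ E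

def Same3 {V : Type} (X Y Z : Set V) (u v : V) : Prop :=
  (u ∈ X ∧ v ∈ X) ∨ (u ∈ Y ∧ v ∈ Y) ∨ (u ∈ Z ∧ v ∈ Z)

lemma or6comm (a b c d e g : Prop) : (a ∨ b ∨ c ∨ d ∨ e ∨ g) ↔ (d ∨ e ∨ g ∨ a ∨ b ∨ c) := by
  tauto

set_option maxHeartbeats 1000000 in
lemma key {V : Type} (G G' : SimpleGraph V) (A B C D E F : Set V)
    (dAB : Disjoint A B) (dAC : Disjoint A C) (dAD : Disjoint A D)
    (dAE : Disjoint A E) (dAF : Disjoint A F)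
    (dBC : Disjoint B C) (dBD : Disjoint B D) (dBE : Disjoint B E) (dBF : Disjoint B F)
    (dCD : Disjoint C D) (dCE : Disjoint C E) (dCF : Disjoint C F)
    (dDE : Disjoint D E) (dDF : Disjoint D F) (dEF : Disjoint E F)
    (hside : ∀ x : V, x ∈ A ∪ B ∪ C ∨ x ∈ D ∪ E ∪ F)
    (hiA : IndepIn G A) (hiB : IndepIn G B) (hiC : IndepIn G C)
    (hiD : IndepIn G D) (hiE : IndepIn G E) (hiF : IndepIn G F)
    (hdegR : ∀ v ∈ A ∪ B ∪ C,
      (G.neighborSet v ∩ D).Subsingleton ∧ (G.neighborSet v ∩ E).Subsingleton ∧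
      (G.neighborSet v ∩ F).Subsingleton)
    (hdegS : ∀ v ∈ D ∪ E ∪ F,
      (G.neighborSet v ∩ A).Subsingleton ∧ (G.neighborSet v ∩ B).Subsingleton ∧
      (G.neighborSet v ∩ C).Subsingleton)
    (hG' : ∀ u v : V, G'.Adj u v ↔ (G.Adj u v ∨ (u ≠ v ∧
      (BetweenSets u v A B ∨ BetweenSets u v A C ∨ BetweenSets u v B C ∨
       BetweenSets u v D E ∨ BetweenSets u v D F ∨ BetweenSets u v E F))))
    (f : Fin 6 → V) (hinj : Function.Injective f)
    (hadj : ∀ i j : Fin 6, G'.Adj (f i) (f j) ↔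
      s(i, j) ∈ ({s(0, 1), s(1, 2), s(3, 4)} : Set (Sym2 (Fin 6))))
    (h5 : f 5 ∈ A ∪ B ∪ C) : False := by
  have exAll : ∀ x : V,
      (x ∈ A → x ∉ B ∧ x ∉ C ∧ x ∉ D ∧ x ∉ E ∧ x ∉ F) ∧
      (x ∈ B → x ∉ A ∧ x ∉ C ∧ x ∉ D ∧ x ∉ E ∧ x ∉ F) ∧
      (x ∈ C → x ∉ A ∧ x ∉ B ∧ x ∉ D ∧ x ∉ E ∧ x ∉ F) ∧
      (x ∈ D → x ∉ A ∧ x ∉ B ∧ x ∉ C ∧ x ∉ E ∧ x ∉ F) ∧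
      (x ∈ E → x ∉ A ∧ x ∉ B ∧ x ∉ C ∧ x ∉ D ∧ x ∉ F) ∧
      (x ∈ F → x ∉ A ∧ x ∉ B ∧ x ∉ C ∧ x ∉ D ∧ x ∉ E) := fun x =>
    ⟨fun h => ⟨Set.disjoint_left.mp dAB h, Set.disjoint_left.mp dAC h,
        Set.disjoint_left.mp dAD h, Set.disjoint_left.mp dAE h, Set.disjoint_left.mp dAF h⟩,
     fun h => ⟨Set.disjoint_right.mp dAB h, Set.disjoint_left.mp dBC h,
        Set.disjoint_left.mp dBD h, Set.disjoint_left.mp dBE h, Set.disjoint_left.mp dBF h⟩,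
     fun h => ⟨Set.disjoint_right.mp dAC h, Set.disjoint_right.mp dBC h,
        Set.disjoint_left.mp dCD h, Set.disjoint_left.mp dCE h, Set.disjoint_left.mp dCF h⟩,
     fun h => ⟨Set.disjoint_right.mp dAD h, Set.disjoint_right.mp dBD h,
        Set.disjoint_right.mp dCD h, Set.disjoint_left.mp dDE h, Set.disjoint_left.mp dDF h⟩,
     fun h => ⟨Set.disjoint_right.mp dAE h, Set.disjoint_right.mp dBE h,
        Set.disjoint_right.mp dCE h, Set.disjoint_right.mp dDE h, Set.disjoint_left.mp dEF h⟩,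
     fun h => ⟨Set.disjoint_right.mp dAF h, Set.disjoint_right.mp dBF h,
        Set.disjoint_right.mp dCF h, Set.disjoint_right.mp dDF h, Set.disjoint_right.mp dEF h⟩⟩
  have hRR : ∀ u v : V, u ∈ A ∪ B ∪ C → v ∈ A ∪ B ∪ C → u ≠ v → ¬ G'.Adj u v →
      Same3 A B C u v := by
    intro u v hu hv hne hn
    have hb : ∀ h : (BetweenSets u v A B ∨ BetweenSets u v A C ∨ BetweenSets u v B C ∨
        BetweenSets u v D E ∨ BetweenSets u v D F ∨ BetweenSets u v E F), G'.Adj u v :=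
      fun h => (hG' u v).mpr (Or.inr ⟨hne, h⟩)
    simp only [Set.mem_union] at hu hv
    simp only [BetweenSets] at hb
    rcases hu with (hu | hu) | hu <;> rcases hv with (hv | hv) | hv <;>
      first
        | exact Or.inl ⟨hu, hv⟩
        | exact Or.inr (Or.inl ⟨hu, hv⟩)
        | exact Or.inr (Or.inr ⟨hu, hv⟩)
        | exact absurd (hb (Or.inl (Or.inl ⟨hu, hv⟩))) hn
        | exact absurd (hb (Or.inl (Or.inr ⟨hu, hv⟩))) hn
        | exact absurd (hb (Or.inr (Or.inl (Or.inl ⟨hu, hv⟩)))) hn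
        | exact absurd (hb (Or.inr (Or.inl (Or.inr ⟨hu, hv⟩)))) hn
        | exact absurd (hb (Or.inr (Or.inr (Or.inl (Or.inl ⟨hu, hv⟩))))) hn
        | exact absurd (hb (Or.inr (Or.inr (Or.inl (Or.inr ⟨hu, hv⟩))))) hn
        | exact absurd (hb (Or.inr (Or.inr (Or.inr (Or.inl (Or.inl ⟨hu, hv⟩)))))) hn
        | exact absurd (hb (Or.inr (Or.inr (Or.inr (Or.inl (Or.inr ⟨hu, hv⟩)))))) hn
        | exact absurd (hb (Or.inr (Or.inr (Or.inr (Or.inr (Or.inl (Or.inl ⟨hu, hv⟩))))))) hn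
        | exact absurd (hb (Or.inr (Or.inr (Or.inr (Or.inr (Or.inl (Or.inr ⟨hu, hv⟩))))))) hn
        | exact absurd (hb (Or.inr (Or.inr (Or.inr (Or.inr (Or.inr (Or.inl ⟨hu, hv⟩))))))) hn
        | exact absurd (hb (Or.inr (Or.inr (Or.inr (Or.inr (Or.inr (Or.inr ⟨hu, hv⟩))))))) hn
  have hSS : ∀ u v : V, u ∈ D ∪ E ∪ F → v ∈ D ∪ E ∪ F → u ≠ v → ¬ G'.Adj u v →
      Same3 D E F u v := by
    intro u v hu hv hne hn
    have hb : ∀ h : (BetweenSets u v A B ∨ BetweenSets u v A C ∨ BetweenSets u v B C ∨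
        BetweenSets u v D E ∨ BetweenSets u v D F ∨ BetweenSets u v E F), G'.Adj u v :=
      fun h => (hG' u v).mpr (Or.inr ⟨hne, h⟩)
    simp only [Set.mem_union] at hu hv
    simp only [BetweenSets] at hb
    rcases hu with (hu | hu) | hu <;> rcases hv with (hv | hv) | hv <;>
      first
        | exact Or.inl ⟨hu, hv⟩
        | exact Or.inr (Or.inl ⟨hu, hv⟩)
        | exact Or.inr (Or.inr ⟨hu, hv⟩)
        | exact absurd (hb (Or.inl (Or.inl ⟨hu, hv⟩))) hn
        | exact absurd (hb (Or.inl (Or.inr ⟨hu, hv⟩))) hn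
        | exact absurd (hb (Or.inr (Or.inl (Or.inl ⟨hu, hv⟩)))) hn
        | exact absurd (hb (Or.inr (Or.inl (Or.inr ⟨hu, hv⟩)))) hn
        | exact absurd (hb (Or.inr (Or.inr (Or.inl (Or.inl ⟨hu, hv⟩))))) hn
        | exact absurd (hb (Or.inr (Or.inr (Or.inl (Or.inr ⟨hu, hv⟩))))) hn
        | exact absurd (hb (Or.inr (Or.inr (Or.inr (Or.inl (Or.inl ⟨hu, hv⟩)))))) hn
        | exact absurd (hb (Or.inr (Or.inr (Or.inr (Or.inl (Or.inr ⟨hu, hv⟩)))))) hn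
        | exact absurd (hb (Or.inr (Or.inr (Or.inr (Or.inr (Or.inl (Or.inl ⟨hu, hv⟩))))))) hn
        | exact absurd (hb (Or.inr (Or.inr (Or.inr (Or.inr (Or.inl (Or.inr ⟨hu, hv⟩))))))) hn
        | exact absurd (hb (Or.inr (Or.inr (Or.inr (Or.inr (Or.inr (Or.inl ⟨hu, hv⟩))))))) hn
        | exact absurd (hb (Or.inr (Or.inr (Or.inr (Or.inr (Or.inr (Or.inr ⟨hu, hv⟩))))))) hn
  have hnsR : ∀ u v : V, Same3 A B C u v → ¬ G'.Adj u v := by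
    intro u v hs h
    rw [hG'] at h
    rcases h with h | ⟨-, h⟩
    · rcases hs with ⟨h1, h2⟩ | ⟨h1, h2⟩ | ⟨h1, h2⟩
      exacts [hiA u h1 v h2 h, hiB u h1 v h2 h, hiC u h1 v h2 h]
    · simp only [BetweenSets] at h
      rcases hs with ⟨h1, h2⟩ | ⟨h1, h2⟩ | ⟨h1, h2⟩
      · obtain ⟨n1, n2, n3, n4, n5⟩ := (exAll u).1 h1
        obtain ⟨m1, m2, m3, m4, m5⟩ := (exAll v).1 h2
        rcases h with (⟨p, q⟩ | ⟨p, q⟩) | (⟨p, q⟩ | ⟨p, q⟩) | (⟨p, q⟩ | ⟨p, q⟩) | (⟨p, q⟩ | ⟨p, q⟩) | (⟨p, q⟩ | ⟨p, q⟩) | (⟨p, q⟩ | ⟨p, q⟩) <;>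
          first
            | exact n1 p | exact n2 p | exact n3 p | exact n4 p | exact n5 p
            | exact m1 q | exact m2 q | exact m3 q | exact m4 q | exact m5 q
      · obtain ⟨n1, n2, n3, n4, n5⟩ := (exAll u).2.1 h1
        obtain ⟨m1, m2, m3, m4, m5⟩ := (exAll v).2.1 h2
        rcases h with (⟨p, q⟩ | ⟨p, q⟩) | (⟨p, q⟩ | ⟨p, q⟩) | (⟨p, q⟩ | ⟨p, q⟩) | (⟨p, q⟩ | ⟨p, q⟩) | (⟨p, q⟩ | ⟨p, q⟩) | (⟨p, q⟩ | ⟨p, q⟩) <;>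
          first
            | exact n1 p | exact n2 p | exact n3 p | exact n4 p | exact n5 p
            | exact m1 q | exact m2 q | exact m3 q | exact m4 q | exact m5 q
      · obtain ⟨n1, n2, n3, n4, n5⟩ := (exAll u).2.2.1 h1
        obtain ⟨m1, m2, m3, m4, m5⟩ := (exAll v).2.2.1 h2
        rcases h with (⟨p, q⟩ | ⟨p, q⟩) | (⟨p, q⟩ | ⟨p, q⟩) | (⟨p, q⟩ | ⟨p, q⟩) | (⟨p, q⟩ | ⟨p, q⟩) | (⟨p, q⟩ | ⟨p, q⟩) | (⟨p, q⟩ | ⟨p, q⟩) <;>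
          first
            | exact n1 p | exact n2 p | exact n3 p | exact n4 p | exact n5 p
            | exact m1 q | exact m2 q | exact m3 q | exact m4 q | exact m5 q
  have hnsS : ∀ u v : V, Same3 D E F u v → ¬ G'.Adj u v := by
    intro u v hs h
    rw [hG'] at h
    rcases h with h | ⟨-, h⟩
    · rcases hs with ⟨h1, h2⟩ | ⟨h1, h2⟩ | ⟨h1, h2⟩
      exacts [hiD u h1 v h2 h, hiE u h1 v h2 h, hiF u h1 v h2 h]
    · simp only [BetweenSets] at h
      rcases hs with ⟨h1, h2⟩ | ⟨h1, h2⟩ | ⟨h1, h2⟩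
      · obtain ⟨n1, n2, n3, n4, n5⟩ := (exAll u).2.2.2.1 h1
        obtain ⟨m1, m2, m3, m4, m5⟩ := (exAll v).2.2.2.1 h2
        rcases h with (⟨p, q⟩ | ⟨p, q⟩) | (⟨p, q⟩ | ⟨p, q⟩) | (⟨p, q⟩ | ⟨p, q⟩) | (⟨p, q⟩ | ⟨p, q⟩) | (⟨p, q⟩ | ⟨p, q⟩) | (⟨p, q⟩ | ⟨p, q⟩) <;>
          first
            | exact n1 p | exact n2 p | exact n3 p | exact n4 p | exact n5 p
            | exact m1 q | exact m2 q | exact m3 q | exact m4 q | exact m5 q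
      · obtain ⟨n1, n2, n3, n4, n5⟩ := (exAll u).2.2.2.2.1 h1
        obtain ⟨m1, m2, m3, m4, m5⟩ := (exAll v).2.2.2.2.1 h2
        rcases h with (⟨p, q⟩ | ⟨p, q⟩) | (⟨p, q⟩ | ⟨p, q⟩) | (⟨p, q⟩ | ⟨p, q⟩) | (⟨p, q⟩ | ⟨p, q⟩) | (⟨p, q⟩ | ⟨p, q⟩) | (⟨p, q⟩ | ⟨p, q⟩) <;>
          first
            | exact n1 p | exact n2 p | exact n3 p | exact n4 p | exact n5 p
            | exact m1 q | exact m2 q | exact m3 q | exact m4 q | exact m5 q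
      · obtain ⟨n1, n2, n3, n4, n5⟩ := (exAll u).2.2.2.2.2 h1
        obtain ⟨m1, m2, m3, m4, m5⟩ := (exAll v).2.2.2.2.2 h2
        rcases h with (⟨p, q⟩ | ⟨p, q⟩) | (⟨p, q⟩ | ⟨p, q⟩) | (⟨p, q⟩ | ⟨p, q⟩) | (⟨p, q⟩ | ⟨p, q⟩) | (⟨p, q⟩ | ⟨p, q⟩) | (⟨p, q⟩ | ⟨p, q⟩) <;>
          first
            | exact n1 p | exact n2 p | exact n3 p | exact n4 p | exact n5 p
            | exact m1 q | exact m2 q | exact m3 q | exact m4 q | exact m5 q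
  have hcross : ∀ u v : V, u ∈ A ∪ B ∪ C → v ∈ D ∪ E ∪ F → G'.Adj u v → G.Adj u v := by
    intro u v hu hv h
    rw [hG'] at h
    rcases h with h | ⟨-, h⟩
    · exact h
    · exfalso
      simp only [Set.mem_union] at hu hv
      simp only [BetweenSets] at h
      have e1 : u ∉ D ∧ u ∉ E ∧ u ∉ F := by
        rcases hu with (h' | h') | h'
        exacts [((exAll u).1 h').2.2, ((exAll u).2.1 h').2.2, ((exAll u).2.2.1 h').2.2]
      have e2 : v ∉ A ∧ v ∉ B ∧ v ∉ C := by
        rcases hv with (h' | h') | h'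
        exacts [(fun t => ⟨t.1, t.2.1, t.2.2.1⟩) ((exAll v).2.2.2.1 h'),
          (fun t => ⟨t.1, t.2.1, t.2.2.1⟩) ((exAll v).2.2.2.2.1 h'),
          (fun t => ⟨t.1, t.2.1, t.2.2.1⟩) ((exAll v).2.2.2.2.2 h')]
      obtain ⟨u1, u2, u3⟩ := e1
      obtain ⟨v1, v2, v3⟩ := e2
      rcases h with (⟨p, q⟩ | ⟨p, q⟩) | (⟨p, q⟩ | ⟨p, q⟩) | (⟨p, q⟩ | ⟨p, q⟩) | (⟨p, q⟩ | ⟨p, q⟩) | (⟨p, q⟩ | ⟨p, q⟩) | (⟨p, q⟩ | ⟨p, q⟩) <;>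
        first
          | exact u1 p | exact u2 p | exact u3 p
          | exact v1 q | exact v2 q | exact v3 q
  have htrR : ∀ a b c : V, Same3 A B C a c → Same3 A B C b c → Same3 A B C a b := by
    intro a b c h1 h2
    rcases h1 with ⟨x1, x2⟩ | ⟨x1, x2⟩ | ⟨x1, x2⟩ <;>
      rcases h2 with ⟨y1, y2⟩ | ⟨y1, y2⟩ | ⟨y1, y2⟩ <;>
      first
        | exact Or.inl ⟨x1, y1⟩
        | exact Or.inr (Or.inl ⟨x1, y1⟩)
        | exact Or.inr (Or.inr ⟨x1, y1⟩)
        | exact absurd y2 (((exAll c).1 x2).1)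
        | exact absurd y2 (((exAll c).1 x2).2.1)
        | exact absurd x2 (((exAll c).1 y2).1)
        | exact absurd x2 (((exAll c).1 y2).2.1)
        | exact absurd y2 (((exAll c).2.1 x2).2.1)
        | exact absurd x2 (((exAll c).2.1 y2).2.1)
  have htrS : ∀ a b c : V, Same3 D E F a c → Same3 D E F b c → Same3 D E F a b := by
    intro a b c h1 h2
    rcases h1 with ⟨x1, x2⟩ | ⟨x1, x2⟩ | ⟨x1, x2⟩ <;>
      rcases h2 with ⟨y1, y2⟩ | ⟨y1, y2⟩ | ⟨y1, y2⟩ <;>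
      first
        | exact Or.inl ⟨x1, y1⟩
        | exact Or.inr (Or.inl ⟨x1, y1⟩)
        | exact Or.inr (Or.inr ⟨x1, y1⟩)
        | exact absurd y2 (((exAll c).2.2.2.1 x2).2.2.2.1)
        | exact absurd y2 (((exAll c).2.2.2.1 x2).2.2.2.2)
        | exact absurd x2 (((exAll c).2.2.2.1 y2).2.2.2.1)
        | exact absurd x2 (((exAll c).2.2.2.1 y2).2.2.2.2)
        | exact absurd y2 (((exAll c).2.2.2.2.1 x2).2.2.2.2)
        | exact absurd x2 (((exAll c).2.2.2.2.1 y2).2.2.2.2)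
  have hsyS : ∀ a b : V, Same3 D E F a b → Same3 D E F b a := by
    intro a b h
    rcases h with ⟨h1, h2⟩ | ⟨h1, h2⟩ | ⟨h1, h2⟩
    exacts [Or.inl ⟨h2, h1⟩, Or.inr (Or.inl ⟨h2, h1⟩), Or.inr (Or.inr ⟨h2, h1⟩)]
  have hdR : ∀ u v w : V, u ∈ A ∪ B ∪ C → G.Adj u v → G.Adj u w → Same3 D E F v w →
      v = w := by
    intro u v w hu h1 h2 hs
    obtain ⟨s1, s2, s3⟩ := hdegR u hu
    rcases hs with ⟨a, b⟩ | ⟨a, b⟩ | ⟨a, b⟩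
    exacts [s1 (Set.mem_inter h1 a) (Set.mem_inter h2 b),
      s2 (Set.mem_inter h1 a) (Set.mem_inter h2 b),
      s3 (Set.mem_inter h1 a) (Set.mem_inter h2 b)]
  have hdS : ∀ u v w : V, u ∈ D ∪ E ∪ F → G.Adj u v → G.Adj u w → Same3 A B C v w →
      v = w := by
    intro u v w hu h1 h2 hs
    obtain ⟨s1, s2, s3⟩ := hdegS u hu
    rcases hs with ⟨a, b⟩ | ⟨a, b⟩ | ⟨a, b⟩
    exacts [s1 (Set.mem_inter h1 a) (Set.mem_inter h2 b),
      s2 (Set.mem_inter h1 a) (Set.mem_inter h2 b),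
      s3 (Set.mem_inter h1 a) (Set.mem_inter h2 b)]
  have hne : ∀ i j : Fin 6, i ≠ j → f i ≠ f j := fun i j h e => h (hinj e)
  have nmem : ∀ i j : Fin 6,
      (s(i, j) = s(0, 1) ∨ s(i, j) = s(1, 2) ∨ s(i, j) = s(3, 4) → False) →
      ¬ G'.Adj (f i) (f j) := by
    intro i j h hadj'
    have hm := (hadj i j).mp hadj'
    simp only [Set.mem_insert_iff, Set.mem_singleton_iff] at hm
    exact h hm
  have a01 : G'.Adj (f 0) (f 1) := (hadj 0 1).mpr (by simp)
  have a12 : G'.Adj (f 1) (f 2) := (hadj 1 2).mpr (by simp)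
  have a34 : G'.Adj (f 3) (f 4) := (hadj 3 4).mpr (by simp)
  have n02 : ¬ G'.Adj (f 0) (f 2) := nmem 0 2 (by decide)
  have n03 : ¬ G'.Adj (f 0) (f 3) := nmem 0 3 (by decide)
  have n04 : ¬ G'.Adj (f 0) (f 4) := nmem 0 4 (by decide)
  have n05 : ¬ G'.Adj (f 0) (f 5) := nmem 0 5 (by decide)
  have n13 : ¬ G'.Adj (f 1) (f 3) := nmem 1 3 (by decide)
  have n14 : ¬ G'.Adj (f 1) (f 4) := nmem 1 4 (by decide)
  have n15 : ¬ G'.Adj (f 1) (f 5) := nmem 1 5 (by decide)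
  have n23 : ¬ G'.Adj (f 2) (f 3) := nmem 2 3 (by decide)
  have n24 : ¬ G'.Adj (f 2) (f 4) := nmem 2 4 (by decide)
  have n25 : ¬ G'.Adj (f 2) (f 5) := nmem 2 5 (by decide)
  have n35 : ¬ G'.Adj (f 3) (f 5) := nmem 3 5 (by decide)
  have n45 : ¬ G'.Adj (f 4) (f 5) := nmem 4 5 (by decide)
  have final : ∀ y : V, y ∈ D ∪ E ∪ F → ¬ G'.Adj (f 0) y → ¬ G'.Adj (f 1) y →
      ¬ G'.Adj (f 2) y → y ≠ f 0 → y ≠ f 1 → y ≠ f 2 → False := by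
    intro y hy ny0 ny1 ny2 e0 e1 e2
    rcases hside (f 1) with h1 | h1
    · have s1 : Same3 A B C (f 1) (f 5) := hRR _ _ h1 h5 (hne 1 5 (by decide)) n15
      have g0 : f 0 ∈ D ∪ E ∪ F := by
        rcases hside (f 0) with h | h
        · exact absurd a01
            (hnsR _ _ (htrR _ _ _ (hRR _ _ h h5 (hne 0 5 (by decide)) n05) s1))
        · exact h
      have g2 : f 2 ∈ D ∪ E ∪ F := by
        rcases hside (f 2) with h | h
        · exact absurd a12
            (hnsR _ _ (htrR _ _ _ s1 (hRR _ _ h h5 (hne 2 5 (by decide)) n25)))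
        · exact h
      have s02 : Same3 D E F (f 0) (f 2) := hSS _ _ g0 g2 (hne 0 2 (by decide)) n02
      exact hne 0 2 (by decide)
        (hdR (f 1) (f 0) (f 2) h1 (hcross _ _ h1 g0 a01.symm) (hcross _ _ h1 g2 a12) s02)
    · have sy1 : Same3 D E F y (f 1) := hSS y (f 1) hy h1 e1 (fun h => ny1 h.symm)
      have g0 : f 0 ∈ A ∪ B ∪ C := by
        rcases hside (f 0) with h | h
        · exact h
        · have sy0 : Same3 D E F y (f 0) := hSS y (f 0) hy h e0 (fun h' => ny0 h'.symm)
          exact absurd a01 (hnsS _ _ (htrS _ _ _ (hsyS _ _ sy0) (hsyS _ _ sy1)))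
      have g2 : f 2 ∈ A ∪ B ∪ C := by
        rcases hside (f 2) with h | h
        · exact h
        · have sy2 : Same3 D E F y (f 2) := hSS y (f 2) hy h e2 (fun h' => ny2 h'.symm)
          exact absurd a12 (hnsS _ _ (htrS _ _ _ (hsyS _ _ sy1) (hsyS _ _ sy2)))
      have s02 : Same3 A B C (f 0) (f 2) :=
        htrR _ _ _ (hRR _ _ g0 h5 (hne 0 5 (by decide)) n05)
          (hRR _ _ g2 h5 (hne 2 5 (by decide)) n25)
      exact hne 0 2 (by decide)
        (hdS (f 1) (f 0) (f 2) h1 (hcross _ _ g0 h1 a01).symm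
          (hcross _ _ g2 h1 a12.symm).symm s02)
  rcases hside (f 4) with h4 | h4
  · rcases hside (f 3) with h3 | h3
    · have s3 := hRR _ _ h3 h5 (hne 3 5 (by decide)) n35
      have s4 := hRR _ _ h4 h5 (hne 4 5 (by decide)) n45
      exact hnsR _ _ (htrR _ _ _ s3 s4) a34
    · exact final (f 3) h3 n03 n13 n23 (hne 3 0 (by decide)) (hne 3 1 (by decide))
        (hne 3 2 (by decide))
  · exact final (f 4) h4 n04 n14 n24 (hne 4 0 (by decide)) (hne 4 1 (by decide))
      (hne 4 2 (by decide))
theorem stmt9 {V : Type} (G G' : SimpleGraph V) (A B C D E F : Set V)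
    (hdisj : ∀ i j : Fin 6, i ≠ j →
      Disjoint (![A, B, C, D, E, F] i) (![A, B, C, D, E, F] j))
    (hcover : A ∪ B ∪ C ∪ D ∪ E ∪ F = Set.univ)
    (hindep : ∀ i : Fin 6, IndepIn G (![A, B, C, D, E, F] i))
    (hdegR : ∀ v ∈ A ∪ B ∪ C,
      (G.neighborSet v ∩ D).Subsingleton ∧ (G.neighborSet v ∩ E).Subsingleton ∧
      (G.neighborSet v ∩ F).Subsingleton)
    (hdegS : ∀ v ∈ D ∪ E ∪ F,
      (G.neighborSet v ∩ A).Subsingleton ∧ (G.neighborSet v ∩ B).Subsingleton ∧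
      (G.neighborSet v ∩ C).Subsingleton)
    (hG' : ∀ u v : V, G'.Adj u v ↔ (G.Adj u v ∨ (u ≠ v ∧
      (BetweenSets u v A B ∨ BetweenSets u v A C ∨ BetweenSets u v B C ∨
       BetweenSets u v D E ∨ BetweenSets u v D F ∨ BetweenSets u v E F)))) :
    -- `G'` has no induced copy of `P₃ + P₂ + P₁`
    ¬ ∃ f : Fin 6 → V, IsInducedPattern G'
      ({s(0, 1), s(1, 2), s(3, 4)} : Set (Sym2 (Fin 6))) f := by
  rintro ⟨f, hinj, hadj⟩
  have dAB : Disjoint A B := by simpa using hdisj 0 1 (by decide)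
  have dAC : Disjoint A C := by simpa using hdisj 0 2 (by decide)
  have dAD : Disjoint A D := by simpa using hdisj 0 3 (by decide)
  have dAE : Disjoint A E := by simpa using hdisj 0 4 (by decide)
  have dAF : Disjoint A F := by simpa using hdisj 0 5 (by decide)
  have dBC : Disjoint B C := by simpa using hdisj 1 2 (by decide)
  have dBD : Disjoint B D := by simpa using hdisj 1 3 (by decide)
  have dBE : Disjoint B E := by simpa using hdisj 1 4 (by decide)
  have dBF : Disjoint B F := by simpa using hdisj 1 5 (by decide)
  have dCD : Disjoint C D := by simpa using hdisj 2 3 (by decide)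
  have dCE : Disjoint C E := by simpa using hdisj 2 4 (by decide)
  have dCF : Disjoint C F := by simpa using hdisj 2 5 (by decide)
  have dDE : Disjoint D E := by simpa using hdisj 3 4 (by decide)
  have dDF : Disjoint D F := by simpa using hdisj 3 5 (by decide)
  have dEF : Disjoint E F := by simpa using hdisj 4 5 (by decide)
  have hiA : IndepIn G A := by simpa using hindep 0
  have hiB : IndepIn G B := by simpa using hindep 1
  have hiC : IndepIn G C := by simpa using hindep 2
  have hiD : IndepIn G D := by simpa using hindep 3
  have hiE : IndepIn G E := by simpa using hindep 4
  have hiF : IndepIn G F := by simpa using hindep 5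
  have hside : ∀ x : V, x ∈ A ∪ B ∪ C ∨ x ∈ D ∪ E ∪ F := by
    intro x
    have hx : x ∈ A ∪ B ∪ C ∪ D ∪ E ∪ F := hcover ▸ Set.mem_univ x
    simp only [Set.mem_union] at hx ⊢
    tauto
  rcases hside (f 5) with h5 | h5
  · exact key G G' A B C D E F dAB dAC dAD dAE dAF dBC dBD dBE dBF dCD dCE dCF
      dDE dDF dEF hside hiA hiB hiC hiD hiE hiF hdegR hdegS hG' f hinj hadj h5
  · exact key G G' D E F A B C dDE dDF dAD.symm dBD.symm dCD.symm dEF dAE.symm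
      dBE.symm dCE.symm dAF.symm dBF.symm dCF.symm dAB dAC dBC
      (fun x => (hside x).symm) hiD hiE hiF hiA hiB hiC hdegS hdegR
      (fun u v => (hG' u v).trans (or_congr_right (and_congr_right
        (fun _ => or6comm _ _ _ _ _ _)))) f hinj hadj h5
end

section
/- Let W be a graph of maximum degree at most 3 with a proper 3-colouring in which no vertex has two neighbours of the same colour, and suppose any two vertices of W have at most one common neighbour. Let g(W) be obtained from W by adding all edges within each colour class. Then every copy of K_4 in g(W) is monochromatic. -/
open SimpleGraph

theorem stmt11 {V : Type} (W : SimpleGraph V) (color : V → Fin 3)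
    (hdeg : ∀ v : V, (W.neighborSet v).ncard ≤ 3)
    (hproper : ∀ u v : V, W.Adj u v → color u ≠ color v)
    (hnotwo : ∀ v x y : V, W.Adj v x → W.Adj v y → x ≠ y → color x ≠ color y)
    (hcommon : ∀ u v : V, u ≠ v → (W.neighborSet u ∩ W.neighborSet v).Subsingleton)
    -- `F` is the graph `g(W)` obtained by completing each colour class
    (F : SimpleGraph V)
    (hF : ∀ u v : V, F.Adj u v ↔ (u ≠ v ∧ (color u = color v ∨ W.Adj u v))) :
    ∀ s : Finset V, F.IsNClique 4 s → ∀ u ∈ s, ∀ v ∈ s, color u = color v := by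
  intro s hs u hu v hv
  by_contra hne
  obtain ⟨x, hx, y, hy, hxy, hcxy⟩ :=
    Finset.exists_ne_map_eq_of_card_lt_of_maps_to
      (t := (Finset.univ : Finset (Fin 3)))
      (by rw [hs.2]; simp)
      (fun a _ => Finset.mem_univ (color a))
  have hz : ∃ z ∈ s, color z ≠ color x := by
    rcases eq_or_ne (color u) (color x) with h | h
    · exact ⟨v, hv, fun hc => hne (h.trans hc.symm)⟩
    · exact ⟨u, hu, h⟩
  obtain ⟨z, hzs, hzc⟩ := hz
  have hzx : z ≠ x := fun h => hzc (h ▸ rfl)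
  have hzy : z ≠ y := fun h => hzc (by rw [h, hcxy])
  have axz : W.Adj z x :=
    (((hF z x).1 (hs.1 (Finset.mem_coe.mpr hzs) (Finset.mem_coe.mpr hx) hzx)).2).resolve_left hzc
  have ayz : W.Adj z y :=
    (((hF z y).1 (hs.1 (Finset.mem_coe.mpr hzs) (Finset.mem_coe.mpr hy) hzy)).2).resolve_left
      (by rw [← hcxy]; exact hzc)
  exact hnotwo z x y axz ayz hxy hcxy
end

section
/- Let W be a triangle-free graph with a proper 4-colouring in which no vertex has two neighbours of the same colour. Let h(W) be obtained from W by adding all edges within each colour class. Then every copy of K_3 in h(W) is monochromatic, and consequently h(W) contains no induced subgraph isomorphic to the complement of (K_{2,2} + P_1). -/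
open SimpleGraph

theorem stmt12 {V : Type} (W : SimpleGraph V) (color : V → Fin 4)
    (htriangle : W.CliqueFree 3)
    (hproper : ∀ u v : V, W.Adj u v → color u ≠ color v)
    (hnotwo : ∀ v x y : V, W.Adj v x → W.Adj v y → x ≠ y → color x ≠ color y)
    -- `F` is the graph `h(W)` obtained by completing each colour class
    (F : SimpleGraph V)
    (hF : ∀ u v : V, F.Adj u v ↔ (u ≠ v ∧ (color u = color v ∨ W.Adj u v))) :
    (∀ s : Finset V, F.IsNClique 3 s → ∀ u ∈ s, ∀ v ∈ s, color u = color v) ∧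
    -- `F` has no induced copy of the complement of `K_{2,2} + P₁`:
    -- a universal vertex `0`, cliques `{1, 2}` and `{3, 4}`, anticomplete to each other
    ¬ ∃ f : Fin 5 → V, IsInducedPattern F
      ({s(0, 1), s(0, 2), s(0, 3), s(0, 4), s(1, 2), s(3, 4)} : Set (Sym2 (Fin 5))) f := by
  classical
  have key : ∀ a b c : V, F.Adj a b → F.Adj b c → F.Adj a c →
      color a = color b ∧ color b = color c := by
    intro a b c hab hbc hac
    rw [hF] at hab hbc hac
    obtain ⟨nab, hab⟩ := hab
    obtain ⟨nbc, hbc⟩ := hbc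
    obtain ⟨nac, hac⟩ := hac
    rcases hab with h1 | h1 <;> rcases hbc with h2 | h2 <;> rcases hac with h3 | h3
    · exact ⟨h1, h2⟩
    · exact ⟨h1, h2⟩
    · exact ⟨h1, h1 ▸ h3⟩
    · -- color a = color b, W.Adj b c, W.Adj a c : c sees a,b of same colour? no,
      -- b and a are neighbours of c
      exact absurd h1 (hnotwo c a b h3.symm h2.symm nab)
    · exact ⟨h3.trans h2.symm, h2⟩
    · -- color b = color c, W.Adj a b, W.Adj a c
      exact absurd h2 (hnotwo a b c h1 h3 nbc)
    · -- color a = color c, W.Adj a b, W.Adj b c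
      exact absurd h3.symm (hnotwo b c a h2 h1.symm (fun h => nac h.symm))
    · exact absurd (is3Clique_triple_iff.mpr ⟨h1, h3, h2⟩) (htriangle {a, b, c})
  have part1 : ∀ s : Finset V, F.IsNClique 3 s → ∀ u ∈ s, ∀ v ∈ s, color u = color v := by
    intro s hs u hu v hv
    obtain ⟨a, b, c, hab, hac, hbc, rfl⟩ := Finset.card_eq_three.mp hs.card_eq
    have hcl := hs.isClique
    have h1 : F.Adj a b := hcl (by simp) (by simp) hab
    have h2 : F.Adj b c := hcl (by simp) (by simp) hbc
    have h3 : F.Adj a c := hcl (by simp) (by simp) hac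
    obtain ⟨e1, e2⟩ := key a b c h1 h2 h3
    simp only [Finset.mem_insert, Finset.mem_singleton] at hu hv
    rcases hu with rfl | rfl | rfl <;> rcases hv with rfl | rfl | rfl <;>
      first
        | rfl | exact e1 | exact e2 | exact e1.symm | exact e2.symm
        | exact e1.trans e2 | exact (e1.trans e2).symm
  refine ⟨part1, ?_⟩
  rintro ⟨f, hinj, hadj⟩
  have mem01 : s(0,1) ∈ ({s(0, 1), s(0, 2), s(0, 3), s(0, 4), s(1, 2), s(3, 4)} :
      Set (Sym2 (Fin 5))) := by simp
  have adj : ∀ i j : Fin 5, (s(i,j) ∈ ({s(0, 1), s(0, 2), s(0, 3), s(0, 4), s(1, 2), s(3, 4)} :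
      Set (Sym2 (Fin 5)))) → F.Adj (f i) (f j) := fun i j h => (hadj i j).mpr h
  have a01 : F.Adj (f 0) (f 1) := adj 0 1 (by simp)
  have a02 : F.Adj (f 0) (f 2) := adj 0 2 (by simp)
  have a03 : F.Adj (f 0) (f 3) := adj 0 3 (by simp)
  have a04 : F.Adj (f 0) (f 4) := adj 0 4 (by simp)
  have a12 : F.Adj (f 1) (f 2) := adj 1 2 (by simp)
  have a34 : F.Adj (f 3) (f 4) := adj 3 4 (by simp)
  obtain ⟨e1, e2⟩ := key (f 0) (f 1) (f 2) a01 a12 a02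
  obtain ⟨e3, e4⟩ := key (f 0) (f 3) (f 4) a03 a34 a04
  -- colors of f1 and f3 are equal, so F.Adj (f 1) (f 3), contradicting pattern
  have h13 : F.Adj (f 1) (f 3) := by
    rw [hF]
    exact ⟨fun h => by have := hinj h; simp at this, Or.inl (e1.symm.trans e3)⟩
  have : s(1,3) ∈ ({s(0, 1), s(0, 2), s(0, 3), s(0, 4), s(1, 2), s(3, 4)} :
      Set (Sym2 (Fin 5))) := (hadj 1 3).mp h13
  simp only [Set.mem_insert_iff, Set.mem_singleton_iff, Sym2.eq, Sym2.rel_iff',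
    Prod.mk.injEq, Prod.swap_prod_mk] at this
  omega
end

section
/- Let G be a 3P_1-free graph (no independent set of size 3), let t ≥ 2, and suppose G has no induced subgraph isomorphic to the complement of (K_{3,t} + P_1). Let S_P and S_Q be (not necessarily disjoint) vertex sets of G and suppose some vertex v is complete to both S_P and S_Q. Then there is no induced matching {p_1q_1, …, p_mq_m} with m = R(3,t) + 6, p_1, …, p_m ∈ S_P, q_1, …, q_m ∈ S_Q, where R(3,t) is the Ramsey number (every graph on R(3,t) vertices contains an independent set of size 3 or a clique of size t). -/
open SimpleGraph

/-- `G` contains an induced copy of the complement of `K_{3,t} + P₁`: a universal vertex `w`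
together with disjoint anticomplete cliques `A` of size 3 and `B` of size `t`. -/
def HasCoK3tP1 {V : Type} (G : SimpleGraph V) (t : ℕ) : Prop :=
  ∃ (w : V) (A B : Finset V),
    A.card = 3 ∧ B.card = t ∧ Disjoint A B ∧ w ∉ A ∧ w ∉ B ∧
    (∀ a ∈ A, ∀ a' ∈ A, a ≠ a' → G.Adj a a') ∧
    (∀ b ∈ B, ∀ b' ∈ B, b ≠ b' → G.Adj b b') ∧
    (∀ a ∈ A, G.Adj w a) ∧ (∀ b ∈ B, G.Adj w b) ∧
    (∀ a ∈ A, ∀ b ∈ B, ¬ G.Adj a b)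

lemma no_indep3 {V : Type} (G : SimpleGraph V) (h : Gᶜ.CliqueFree 3)
    (a b c : V) (hab : a ≠ b) (hac : a ≠ c) (hbc : b ≠ c)
    (h1 : ¬ G.Adj a b) (h2 : ¬ G.Adj a c) (h3 : ¬ G.Adj b c) : False := by
  classical
  exact h {a, b, c} (SimpleGraph.is3Clique_triple_iff.mpr
    ⟨⟨hab, h1⟩, ⟨hac, h2⟩, ⟨hbc, h3⟩⟩)

lemma triangle_of_six {V : Type} (G : SimpleGraph V) (h3 : Gᶜ.CliqueFree 3)
    (a : Fin 6 → V) (ha : Function.Injective a) :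
    ∃ i j k : Fin 6, i ≠ j ∧ i ≠ k ∧ j ≠ k ∧
      G.Adj (a i) (a j) ∧ G.Adj (a i) (a k) ∧ G.Adj (a j) (a k) := by
  classical
  set s : Finset (Fin 6) := Finset.univ.erase 0 with hs
  have hscard : s.card = 5 := by
    rw [hs, Finset.card_erase_of_mem (Finset.mem_univ _)]
    simp
  set s1 := s.filter (fun i => G.Adj (a 0) (a i)) with hs1
  set s2 := s.filter (fun i => ¬ G.Adj (a 0) (a i)) with hs2
  have hsum : s1.card + s2.card = 5 := by
    rw [hs1, hs2, Finset.card_filter_add_card_filter_not, hscard]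
  have hcases : 3 ≤ s1.card ∨ 3 ≤ s2.card := by omega
  rcases hcases with hc | hc
  · obtain ⟨u, hu, hucard⟩ := Finset.exists_subset_card_eq hc
    obtain ⟨x, y, z, hxy, hxz, hyz, rfl⟩ := Finset.card_eq_three.mp hucard
    have hx : x ∈ s1 := hu (by simp)
    have hy : y ∈ s1 := hu (by simp)
    have hz : z ∈ s1 := hu (by simp)
    have hax : G.Adj (a 0) (a x) := (Finset.mem_filter.mp hx).2
    have hay : G.Adj (a 0) (a y) := (Finset.mem_filter.mp hy).2
    have haz : G.Adj (a 0) (a z) := (Finset.mem_filter.mp hz).2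
    have h0x : (0 : Fin 6) ≠ x := fun h => (Finset.mem_erase.mp (Finset.mem_filter.mp hx).1).1 h.symm
    have h0y : (0 : Fin 6) ≠ y := fun h => (Finset.mem_erase.mp (Finset.mem_filter.mp hy).1).1 h.symm
    have h0z : (0 : Fin 6) ≠ z := fun h => (Finset.mem_erase.mp (Finset.mem_filter.mp hz).1).1 h.symm
    by_cases e1 : G.Adj (a x) (a y)
    · exact ⟨0, x, y, h0x, h0y, hxy, hax, hay, e1⟩
    by_cases e2 : G.Adj (a x) (a z)
    · exact ⟨0, x, z, h0x, h0z, hxz, hax, haz, e2⟩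
    by_cases e3 : G.Adj (a y) (a z)
    · exact ⟨0, y, z, h0y, h0z, hyz, hay, haz, e3⟩
    exact absurd (no_indep3 G h3 (a x) (a y) (a z)
      (fun h => hxy (ha h)) (fun h => hxz (ha h)) (fun h => hyz (ha h)) e1 e2 e3) (fun h => h)
  · obtain ⟨u, hu, hucard⟩ := Finset.exists_subset_card_eq hc
    obtain ⟨x, y, z, hxy, hxz, hyz, rfl⟩ := Finset.card_eq_three.mp hucard
    have hx : x ∈ s2 := hu (by simp)
    have hy : y ∈ s2 := hu (by simp)
    have hz : z ∈ s2 := hu (by simp)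
    have hax : ¬ G.Adj (a 0) (a x) := (Finset.mem_filter.mp hx).2
    have hay : ¬ G.Adj (a 0) (a y) := (Finset.mem_filter.mp hy).2
    have haz : ¬ G.Adj (a 0) (a z) := (Finset.mem_filter.mp hz).2
    have h0x : (0 : Fin 6) ≠ x := fun h => (Finset.mem_erase.mp (Finset.mem_filter.mp hx).1).1 h.symm
    have h0y : (0 : Fin 6) ≠ y := fun h => (Finset.mem_erase.mp (Finset.mem_filter.mp hy).1).1 h.symm
    have h0z : (0 : Fin 6) ≠ z := fun h => (Finset.mem_erase.mp (Finset.mem_filter.mp hz).1).1 h.symm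
    by_cases e1 : G.Adj (a x) (a y)
    · by_cases e2 : G.Adj (a x) (a z)
      · by_cases e3 : G.Adj (a y) (a z)
        · exact ⟨x, y, z, hxy, hxz, hyz, e1, e2, e3⟩
        · exact absurd (no_indep3 G h3 (a 0) (a y) (a z)
            (fun h => h0y (ha h)) (fun h => h0z (ha h)) (fun h => hyz (ha h)) hay haz e3) (fun h => h)
      · exact absurd (no_indep3 G h3 (a 0) (a x) (a z)
          (fun h => h0x (ha h)) (fun h => h0z (ha h)) (fun h => hxz (ha h)) hax haz e2) (fun h => h)
    · exact absurd (no_indep3 G h3 (a 0) (a x) (a y)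
        (fun h => h0x (ha h)) (fun h => h0y (ha h)) (fun h => hxy (ha h)) hax hay e1) (fun h => h)

theorem stmt13 {V : Type} (G : SimpleGraph V) (t : ℕ) (ht : 2 ≤ t)
    (h3P1free : Gᶜ.CliqueFree 3)
    (hfree : ¬ HasCoK3tP1 G t)
    (SP SQ : Set V) (v : V)
    (hvP : ∀ x ∈ SP, G.Adj v x) (hvQ : ∀ x ∈ SQ, G.Adj v x)
    (R : ℕ)
    -- `R` has the Ramsey property of `R(3, t)`: every graph on `R` vertices contains
    -- an independent set of size 3 or a clique of size `t`
    (hRam : ∀ H : SimpleGraph (Fin R),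
      (∃ s : Finset (Fin R), Hᶜ.IsNClique 3 s) ∨ (∃ s : Finset (Fin R), H.IsNClique t s)) :
    ¬ ∃ p q : Fin (R + 6) → V,
      Function.Injective p ∧ Function.Injective q ∧
      (∀ i j : Fin (R + 6), p i ≠ q j) ∧
      (∀ i, p i ∈ SP) ∧ (∀ i, q i ∈ SQ) ∧
      (∀ i, G.Adj (p i) (q i)) ∧
      (∀ i j : Fin (R + 6), i ≠ j → ¬ G.Adj (p i) (q j)) := by
  classical
  rintro ⟨p, q, hpinj, hqinj, hpq, hpP, hqQ, hmatch, hind⟩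
  -- function from Fin R into V via q
  set f : Fin R → V := fun i => q (Fin.castAdd 6 i) with hf
  have hfinj : Function.Injective f := hqinj.comp (Fin.castAdd_injective _ _)
  let H : SimpleGraph (Fin R) := SimpleGraph.comap f G
  rcases hRam H with ⟨s, hs⟩ | ⟨s, hs⟩
  · -- independent triple among the q's: contradiction with 3P1-freeness
    obtain ⟨x, y, z, hxy, hxz, hyz, rfl⟩ := SimpleGraph.is3Clique_iff.mp hs
    rw [SimpleGraph.compl_adj] at hxy hxz hyz
    exact no_indep3 G h3P1free (f x) (f y) (f z)
      (fun h => hxy.1 (hfinj h)) (fun h => hxz.1 (hfinj h)) (fun h => hyz.1 (hfinj h))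
      hxy.2 hxz.2 hyz.2
  · -- clique of size t among the q's
    set g : Fin 6 → V := fun j => p (Fin.natAdd R j) with hg
    have hginj : Function.Injective g := by
      intro i j h
      have : Fin.natAdd R i = Fin.natAdd R j := hpinj h
      have := congrArg Fin.val this
      simp [Fin.natAdd] at this
      exact Fin.ext this
    obtain ⟨i, j, k, hij, hik, hjk, e1, e2, e3⟩ := triangle_of_six G h3P1free g hginj
    apply hfree
    refine ⟨v, {g i, g j, g k}, s.image f, ?_, ?_, ?_, ?_, ?_, ?_, ?_, ?_, ?_, ?_⟩
    · exact Finset.card_eq_three.mpr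
        ⟨g i, g j, g k, fun h => hij (hginj h), fun h => hik (hginj h),
          fun h => hjk (hginj h), rfl⟩
    · rw [Finset.card_image_of_injective _ hfinj, hs.2]
    · rw [Finset.disjoint_left]
      intro x hx hx'
      obtain ⟨y, _, hy⟩ := Finset.mem_image.mp hx'
      simp only [Finset.mem_insert, Finset.mem_singleton] at hx
      rcases hx with rfl | rfl | rfl <;> exact hpq _ _ hy.symm
    · intro h
      simp only [Finset.mem_insert, Finset.mem_singleton] at h
      rcases h with h | h | h <;> exact (hvP _ (hpP _)).ne h
    · intro h
      obtain ⟨y, _, hy⟩ := Finset.mem_image.mp h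
      exact (hvQ _ (hqQ _)).ne hy.symm
    · intro x hx y hy hne
      simp only [Finset.mem_insert, Finset.mem_singleton] at hx hy
      rcases hx with rfl | rfl | rfl <;> rcases hy with rfl | rfl | rfl <;>
        first
          | exact absurd rfl hne
          | exact e1 | exact e1.symm | exact e2 | exact e2.symm
          | exact e3 | exact e3.symm
    · intro b hb b' hb' hne
      obtain ⟨x, hx, rfl⟩ := Finset.mem_image.mp hb
      obtain ⟨y, hy, rfl⟩ := Finset.mem_image.mp hb'
      have hxy : x ≠ y := fun h => hne (congrArg f h)
      exact hs.1 hx hy hxy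
    · intro x hx
      simp only [Finset.mem_insert, Finset.mem_singleton] at hx
      rcases hx with rfl | rfl | rfl <;> exact hvP _ (hpP _)
    · intro b hb
      obtain ⟨y, _, rfl⟩ := Finset.mem_image.mp hb
      exact hvQ _ (hqQ _)
    · intro x hx b hb
      obtain ⟨y, _, rfl⟩ := Finset.mem_image.mp hb
      have hne : ∀ m : Fin 6, Fin.natAdd R m ≠ Fin.castAdd 6 y := by
        intro m h
        have := congrArg Fin.val h
        simp [Fin.natAdd, Fin.castAdd, Fin.castLE] at this
        omega
      simp only [Finset.mem_insert, Finset.mem_singleton] at hx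
      rcases hx with rfl | rfl | rfl <;> exact hind _ _ (hne _)
end

section
/- Let H be a non-empty finite set of connected non-null graphs, G a graph, and H(G) the H-graph of G. Let x'_1y'_1, …, x'_ky'_k be a set of k edges of H(G) such that {x'_1, …, x'_k} and {y'_1, …, y'_k} are independent sets in H(G) and x'_i is non-adjacent to y'_j in H(G) for all i ≠ j (i.e., these edges form an induced matching in H(G) with the two sides independent). For a vertex h of H(G), let S(h) ⊆ V(G) be the vertex set of the corresponding subgraph of G. Then: (1) for i ≠ j, the sets S(x'_i) ∪ S(y'_i) and S(x'_j) ∪ S(y'_j) are disjoint and anticomplete in G; (2) for each i, the induced subgraph G[S(x'_i) ∪ S(y'_i)] is connected; and consequently (3) there exist edges x_1y_1, …, x_ky_k of G with x_i, y_i ∈ S(x'_i) ∪ S(y'_i) such that for i ≠ j the pairs {x_i, y_i} and {x_j, y_j} are disjoint and anticomplete in G. -/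
open SimpleGraph

/-- Adjacency in the `H`-graph of `G`: two distinct subgraphs are adjacent iff they share a
vertex or there is an edge of `G` connecting them. -/
def HGraphAdj {V : Type} (G : SimpleGraph V) (H₁ H₂ : G.Subgraph) : Prop :=
  H₁ ≠ H₂ ∧ ((H₁.verts ∩ H₂.verts).Nonempty ∨
    ∃ u ∈ H₁.verts, ∃ v ∈ H₂.verts, G.Adj u v)

lemma HGraphAdj.symm' {V : Type} {G : SimpleGraph V} {A B : G.Subgraph}
    (h : HGraphAdj G A B) : HGraphAdj G B A := by
  obtain ⟨hne, h | ⟨u, hu, v, hv, huv⟩⟩ := h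
  · exact ⟨hne.symm, Or.inl (by rwa [Set.inter_comm])⟩
  · exact ⟨hne.symm, Or.inr ⟨v, hv, u, hu, huv.symm⟩⟩

lemma hgraph_sep {V : Type} {G : SimpleGraph V} {A B : G.Subgraph}
    (h : ¬ HGraphAdj G A B) (hne : A ≠ B) :
    (∀ u ∈ A.verts, u ∉ B.verts) ∧ ∀ u ∈ A.verts, ∀ v ∈ B.verts, ¬ G.Adj u v := by
  unfold HGraphAdj at h
  push_neg at h
  obtain ⟨h1, h2⟩ := h hne
  refine ⟨fun u hu hub => ?_, h2⟩
  have : u ∈ A.verts ∩ B.verts := ⟨hu, hub⟩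
  rw [h1] at this
  exact this

lemma exists_adj_of_walk {V : Type} {G : SimpleGraph V} :
    ∀ {a b : V}, G.Walk a b → a ≠ b → ∃ c, G.Adj a c
  | _, _, SimpleGraph.Walk.nil, h => absurd rfl h
  | _, _, SimpleGraph.Walk.cons h _, _ => ⟨_, h⟩

theorem stmt14 {V : Type} (G : SimpleGraph V)
    -- `H` is a non-empty finite set of connected non-null graphs
    {ι : Type} [Fintype ι] [Nonempty ι] (n : ι → ℕ)
    (Hfam : ∀ i : ι, SimpleGraph (Fin (n i)))
    (hconn : ∀ i, (Hfam i).Connected) (hpos : ∀ i, 0 < n i)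
    (k : ℕ) (x' y' : Fin k → G.Subgraph)
    -- the `x'ᵢ` and `y'ᵢ` are vertices of the `H`-graph of `G`
    (hmemx : ∀ i, ∃ j, Nonempty ((x' i).coe ≃g Hfam j))
    (hmemy : ∀ i, ∃ j, Nonempty ((y' i).coe ≃g Hfam j))
    -- `x'ᵢ y'ᵢ` are edges of `H(G)` forming an induced matching with both sides independent
    (hadj : ∀ i, HGraphAdj G (x' i) (y' i))
    (hindx : ∀ i j, i ≠ j → ¬ HGraphAdj G (x' i) (x' j))
    (hindy : ∀ i j, i ≠ j → ¬ HGraphAdj G (y' i) (y' j))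
    (hcross : ∀ i j, i ≠ j → ¬ HGraphAdj G (x' i) (y' j)) :
    -- (1) distinct pairs are disjoint and anticomplete in `G`
    (∀ i j, i ≠ j →
      Disjoint ((x' i).verts ∪ (y' i).verts) ((x' j).verts ∪ (y' j).verts) ∧
      ∀ u ∈ (x' i).verts ∪ (y' i).verts, ∀ v ∈ (x' j).verts ∪ (y' j).verts,
        ¬ G.Adj u v) ∧
    -- (2) each `G[S(x'ᵢ) ∪ S(y'ᵢ)]` is connected
    (∀ i, (G.induce ((x' i).verts ∪ (y' i).verts)).Connected) ∧
    -- (3) there are edges `xᵢyᵢ` of `G`, one inside each `S(x'ᵢ) ∪ S(y'ᵢ)`, with distinct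
    -- pairs disjoint and anticomplete in `G`
    (∃ x y : Fin k → V,
      (∀ i, x i ∈ (x' i).verts ∪ (y' i).verts ∧ y i ∈ (x' i).verts ∪ (y' i).verts ∧
        G.Adj (x i) (y i)) ∧
      (∀ i j, i ≠ j →
        x i ≠ x j ∧ x i ≠ y j ∧ y i ≠ x j ∧ y i ≠ y j ∧
        ¬ G.Adj (x i) (x j) ∧ ¬ G.Adj (x i) (y j) ∧
        ¬ G.Adj (y i) (x j) ∧ ¬ G.Adj (y i) (y j))) := by
  classical
  -- basic distinctness facts
  have hxy_ne : ∀ i j : Fin k, i ≠ j → x' i ≠ y' j := by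
    intro i j hij h
    have hyy : y' j ≠ y' i := by
      intro h'
      exact (hadj i).1 (h.trans h')
    exact hindy j i hij.symm ⟨hyy, (h ▸ (hadj i)).2⟩
  have hxx_ne : ∀ i j : Fin k, i ≠ j → x' i ≠ x' j := by
    intro i j hij h
    exact hcross i j hij (h ▸ hadj j)
  have hyy_ne : ∀ i j : Fin k, i ≠ j → y' i ≠ y' j := by
    intro i j hij h
    exact hcross i j hij (h ▸ hadj i)
  -- separation facts
  have sepxx : ∀ i j : Fin k, i ≠ j → (∀ u ∈ (x' i).verts, u ∉ (x' j).verts) ∧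
      ∀ u ∈ (x' i).verts, ∀ v ∈ (x' j).verts, ¬ G.Adj u v :=
    fun i j hij => hgraph_sep (hindx i j hij) (hxx_ne i j hij)
  have sepyy : ∀ i j : Fin k, i ≠ j → (∀ u ∈ (y' i).verts, u ∉ (y' j).verts) ∧
      ∀ u ∈ (y' i).verts, ∀ v ∈ (y' j).verts, ¬ G.Adj u v :=
    fun i j hij => hgraph_sep (hindy i j hij) (hyy_ne i j hij)
  have sepxy : ∀ i j : Fin k, i ≠ j → (∀ u ∈ (x' i).verts, u ∉ (y' j).verts) ∧
      ∀ u ∈ (x' i).verts, ∀ v ∈ (y' j).verts, ¬ G.Adj u v :=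
    fun i j hij => hgraph_sep (hcross i j hij) (hxy_ne i j hij)
  have part1 : ∀ i j, i ≠ j →
      Disjoint ((x' i).verts ∪ (y' i).verts) ((x' j).verts ∪ (y' j).verts) ∧
      ∀ u ∈ (x' i).verts ∪ (y' i).verts, ∀ v ∈ (x' j).verts ∪ (y' j).verts,
        ¬ G.Adj u v := by
    intro i j hij
    constructor
    · rw [Set.disjoint_left]
      rintro u (hu | hu) (hv | hv)
      · exact (sepxx i j hij).1 u hu hv
      · exact (sepxy i j hij).1 u hu hv
      · exact (sepxy j i hij.symm).1 u hv hu
      · exact (sepyy i j hij).1 u hu hv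
    · rintro u (hu | hu) v (hv | hv)
      · exact (sepxx i j hij).2 u hu v hv
      · exact (sepxy i j hij).2 u hu v hv
      · intro h; exact (sepxy j i hij.symm).2 v hv u hu h.symm
      · exact (sepyy i j hij).2 u hu v hv
  -- connectedness of each part
  have conx : ∀ i, (G.induce (x' i).verts).Connected := by
    intro i
    obtain ⟨j, ⟨e⟩⟩ := hmemx i
    exact (Subgraph.connected_iff'.mpr (e.connected_iff.mpr (hconn j))).induce_verts
  have cony : ∀ i, (G.induce (y' i).verts).Connected := by
    intro i
    obtain ⟨j, ⟨e⟩⟩ := hmemy i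
    exact (Subgraph.connected_iff'.mpr (e.connected_iff.mpr (hconn j))).induce_verts
  have part2 : ∀ i, (G.induce ((x' i).verts ∪ (y' i).verts)).Connected := by
    intro i
    obtain ⟨-, h | ⟨u, hu, v, hv, huv⟩⟩ := hadj i
    · exact induce_union_connected (conx i).preconnected (cony i).preconnected h
    · exact connected_induce_union (conx i).preconnected (cony i).preconnected hu hv huv
  refine ⟨part1, part2, ?_⟩
  -- part 3
  have h3 : ∀ i, ∃ u v, u ∈ (x' i).verts ∪ (y' i).verts ∧
      v ∈ (x' i).verts ∪ (y' i).verts ∧ G.Adj u v := by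
    intro i
    obtain ⟨hne, h | ⟨u, hu, v, hv, huv⟩⟩ := hadj i
    · -- shared vertex; find a second vertex in the union
      obtain ⟨u, hux, huy⟩ := h
      have : ∃ w ∈ (x' i).verts ∪ (y' i).verts, w ≠ u := by
        by_contra hcon
        push_neg at hcon
        have hx1 : (x' i).verts = {u} := by
          apply Set.eq_singleton_iff_unique_mem.mpr
          exact ⟨hux, fun w hw => hcon w (Or.inl hw)⟩
        have hy1 : (y' i).verts = {u} := by
          apply Set.eq_singleton_iff_unique_mem.mpr
          exact ⟨huy, fun w hw => hcon w (Or.inr hw)⟩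
        apply hne
        ext a b
        · rw [hx1, hy1]
        · constructor
          · intro hab
            have ha : a ∈ (x' i).verts := (x' i).edge_vert hab
            have hb : b ∈ (x' i).verts := (x' i).edge_vert hab.symm
            rw [hx1] at ha hb
            have := (x' i).adj_sub hab
            rw [ha, hb] at this
            exact absurd this (G.irrefl)
          · intro hab
            have ha : a ∈ (y' i).verts := (y' i).edge_vert hab
            have hb : b ∈ (y' i).verts := (y' i).edge_vert hab.symm
            rw [hy1] at ha hb
            have := (y' i).adj_sub hab
            rw [ha, hb] at this
            exact absurd this (G.irrefl)
      obtain ⟨w, hw, hwu⟩ := this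
      have hu' : u ∈ (x' i).verts ∪ (y' i).verts := Or.inl hux
      have hreach := (part2 i).preconnected ⟨u, hu'⟩ ⟨w, hw⟩
      obtain ⟨p⟩ := hreach
      have hne' : (⟨u, hu'⟩ : ((x' i).verts ∪ (y' i).verts : Set V)) ≠ ⟨w, hw⟩ := by
        intro h'
        exact hwu (congrArg Subtype.val h').symm
      obtain ⟨⟨c, hc⟩, hadjc⟩ := exists_adj_of_walk p hne'
      exact ⟨u, c, hu', hc, hadjc⟩
    · exact ⟨u, v, Or.inl hu, Or.inr hv, huv⟩
  choose x y hx hy hxyadj using h3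
  refine ⟨x, y, fun i => ⟨hx i, hy i, hxyadj i⟩, ?_⟩
  intro i j hij
  obtain ⟨hdisj, hanti⟩ := part1 i j hij
  rw [Set.disjoint_left] at hdisj
  refine ⟨?_, ?_, ?_, ?_, hanti _ (hx i) _ (hx j), hanti _ (hx i) _ (hy j),
    hanti _ (hy i) _ (hx j), hanti _ (hy i) _ (hy j)⟩
  · intro h; exact hdisj (hx i) (h ▸ hx j)
  · intro h; exact hdisj (hx i) (h ▸ hy j)
  · intro h; exact hdisj (hy i) (h ▸ hx j)
  · intro h; exact hdisj (hy i) (h ▸ hy j)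
end

section
/- Let G be a 4P_1-free graph. For any subsets S_α and S_β of V(G) such that some vertex v_i of G is complete to both S_α and S_β (and v_i ∉ S_α ∪ S_β), and assuming G has no induced subgraph isomorphic to the complement of (K_{2,t} + P_1) for some t ≥ 2: there is no induced matching of size R(4,t) + 4 between S_α and S_β, where R(4,t) is the Ramsey number (every graph on R(4,t) vertices has an independent set of size 4 or a clique of size t). -/
open SimpleGraph

theorem stmt16 {V : Type} (G : SimpleGraph V) (t : ℕ) (ht : 2 ≤ t)
    (h4P1free : Gᶜ.CliqueFree 4)
    (hfree : ¬ HasCoK2tP1 G t)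
    (Sα Sβ : Set V) (vi : V) (hvi : vi ∉ Sα ∪ Sβ)
    (hvα : ∀ x ∈ Sα, G.Adj vi x) (hvβ : ∀ x ∈ Sβ, G.Adj vi x)
    (R : ℕ)
    -- `R` has the Ramsey property of `R(4, t)`: every graph on `R` vertices contains
    -- an independent set of size 4 or a clique of size `t`
    (hRam : ∀ H : SimpleGraph (Fin R),
      (∃ s : Finset (Fin R), Hᶜ.IsNClique 4 s) ∨ (∃ s : Finset (Fin R), H.IsNClique t s)) :
    ¬ ∃ p q : Fin (R + 4) → V,
      Function.Injective p ∧ Function.Injective q ∧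
      (∀ i j : Fin (R + 4), p i ≠ q j) ∧
      (∀ i, p i ∈ Sα) ∧ (∀ i, q i ∈ Sβ) ∧
      (∀ i, G.Adj (p i) (q i)) ∧
      (∀ i j : Fin (R + 4), i ≠ j → ¬ G.Adj (p i) (q j)) := by
  rintro ⟨p, q, hpinj, hqinj, hpq, hpα, hqβ, hadj, hind⟩
  classical
  simp only [Set.mem_union, not_or] at hvi
  obtain ⟨hviα, hviβ⟩ := hvi
  set e : Fin R → Fin (R + 4) := fun i => Fin.castAdd 4 i with he
  have heinj : Function.Injective e := by
    intro i j h
    exact Fin.ext (by simpa [he] using congrArg Fin.val h)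
  have hqe : Function.Injective (fun i => q (e i)) := hqinj.comp heinj
  rcases hRam (G.comap (fun i => q (e i))) with ⟨s, hclq, hcard⟩ | ⟨s, hclq, hcard⟩
  · -- 4 pairwise G-nonadjacent q-vertices: clique of size 4 in Gᶜ
    refine h4P1free (s.image (fun i => q (e i))) ⟨?_, ?_⟩
    · intro x hx y hy hxy
      simp only [Finset.coe_image, Set.mem_image, Finset.mem_coe] at hx hy
      obtain ⟨i, hi, rfl⟩ := hx
      obtain ⟨j, hj, rfl⟩ := hy
      have hij : i ≠ j := fun h => hxy (by rw [h])
      have h2 := hclq hi hj hij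
      rw [compl_adj] at h2 ⊢
      exact ⟨hxy, by simpa using h2.2⟩
    · rw [Finset.card_image_of_injective _ hqe, hcard]
  · -- clique of size t among the q-vertices
    set f : Fin 4 → Fin (R + 4) := fun k => Fin.natAdd R k with hf
    have hfinj : Function.Injective f := by
      intro i j h
      have h2 := congrArg Fin.val h
      simp only [hf, Fin.coe_natAdd] at h2
      exact Fin.ext (by omega)
    have hpf : Function.Injective (fun k => p (f k)) := hpinj.comp hfinj
    have hcard4 : (Finset.univ.image fun k => p (f k)).card = 4 := by
      rw [Finset.card_image_of_injective _ hpf, Finset.card_univ, Fintype.card_fin]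
    have hnc : ¬ Gᶜ.IsClique (↑(Finset.univ.image fun k => p (f k))) :=
      fun h => h4P1free _ ⟨h, hcard4⟩
    rw [SimpleGraph.isClique_iff, Set.Pairwise] at hnc
    push_neg at hnc
    obtain ⟨x, hx, y, hy, hxy, hnadj⟩ := hnc
    have hGxy : G.Adj x y := by
      rw [compl_adj, not_and, not_not] at hnadj
      exact hnadj hxy
    simp only [Finset.coe_image, Set.mem_image, Finset.mem_coe, Finset.mem_univ,
      true_and, Finset.coe_univ, Set.mem_univ] at hx hy
    obtain ⟨k₁, rfl⟩ := hx
    obtain ⟨k₂, rfl⟩ := hy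
    have hfe : ∀ (k : Fin 4) (i : Fin R), f k ≠ e i := by
      intro k i h
      have := congrArg Fin.val h
      simp [hf, he] at this
      omega
    have hmemB : ∀ b ∈ s.image (fun i => q (e i)), ∃ i ∈ s, q (e i) = b := by
      intro b hb
      simpa using hb
    refine hfree ⟨vi, p (f k₁), p (f k₂), s.image (fun i => q (e i)),
      ?_, ?_, hGxy, ?_, ?_, ?_, ?_, ?_, ?_, ?_, ?_, ?_, ?_⟩
    · rw [Finset.card_image_of_injective _ hqe, hcard]
    · exact fun h => hxy (by rw [h])
    · intro hmem
      obtain ⟨i, _, hi⟩ := hmemB _ hmem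
      exact hviβ (hi ▸ hqβ (e i))
    · intro hmem
      obtain ⟨i, _, hi⟩ := hmemB _ hmem
      exact hpq (f k₁) (e i) hi.symm
    · intro hmem
      obtain ⟨i, _, hi⟩ := hmemB _ hmem
      exact hpq (f k₂) (e i) hi.symm
    · exact fun h => hviα (h ▸ hpα (f k₁))
    · exact fun h => hviα (h ▸ hpα (f k₂))
    · exact hvα _ (hpα (f k₁))
    · exact hvα _ (hpα (f k₂))
    · intro b hb
      obtain ⟨i, _, hi⟩ := hmemB _ hb
      exact hi ▸ hvβ _ (hqβ (e i))
    · intro b hb b' hb' hbb'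
      obtain ⟨i, his, hi⟩ := hmemB _ hb
      obtain ⟨j, hjs, hj⟩ := hmemB _ hb'
      have hij : i ≠ j := fun h => hbb' (by rw [← hi, ← hj, h])
      have := hclq his hjs hij
      rw [comap_adj] at this
      rwa [← hi, ← hj]
    · intro b hb
      obtain ⟨i, _, hi⟩ := hmemB _ hb
      exact ⟨hi ▸ hind (f k₁) (e i) (hfe k₁ i),
             hi ▸ hind (f k₂) (e i) (hfe k₂ i)⟩
end

section
/- Let G be a graph vertex-partitioned into five independent sets X, Y, A, B, C such that: X is anticomplete to Y; A, B, C are pairwise anticomplete; G has no cycle of length 4 (so each pair of vertices x ∈ X, y ∈ Y has at most one common neighbour in A ∪ B ∪ C). Let G'' be obtained from G by adding all edges between X and Y, and, for each pair of distinct classes R, S ∈ {A, B, C}, all edges rs with r ∈ R, s ∈ S except certain excluded pairs, where the exclusion relation satisfies: for any two distinct vertices u_1, u_2 in a common class of {A, B, C} and any vertex u_3 in a different class of {A, B, C}, u_3 is adjacent in G'' to at least one of u_1, u_2. Then G'' contains no induced subgraph isomorphic to 2P_3 + P_2 (two disjoint paths on three vertices plus a disjoint edge, pairwise anticomplete), given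 additionally that: each class of {A, B, C} is independent in G'', each vertex of A ∪ B ∪ C has at most one neighbour in X and at most one in Y in G'', and the edges of G'' between X ∪ Y and A ∪ B ∪ C are exactly those of G, and it is known that in any induced copy of P_3 + P_2 in G'' the middle vertex of the P_3 lies in X ∪ Y and at least one endpoint of the P_3 lies in X ∪ Y. -/
open SimpleGraph

/-- `S` is anticomplete to `T` in `G`. -/
def Anticomplete {V : Type} (G : SimpleGraph V) (S T : Set V) : Prop :=
  ∀ u ∈ S, ∀ v ∈ T, ¬ G.Adj u v

/-- `u` and `v` lie in the same class among `A`, `B`, `C`. -/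
def SameClass {V : Type} (A B C : Set V) (u v : V) : Prop :=
  (u ∈ A ∧ v ∈ A) ∨ (u ∈ B ∧ v ∈ B) ∨ (u ∈ C ∧ v ∈ C)

theorem stmt17 {V : Type} (G G'' : SimpleGraph V) (X Y A B C : Set V)
    -- `X, Y, A, B, C` partition `V(G)` into independent sets
    (hdisj : ∀ i j : Fin 5, i ≠ j →
      Disjoint (![X, Y, A, B, C] i) (![X, Y, A, B, C] j))
    (hcover : X ∪ Y ∪ A ∪ B ∪ C = Set.univ)
    (hindepG : ∀ i : Fin 5, IndepIn G (![X, Y, A, B, C] i))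
    -- `X` is anticomplete to `Y` and `A, B, C` are pairwise anticomplete in `G`
    (hXY : Anticomplete G X Y)
    (hAB : Anticomplete G A B) (hAC : Anticomplete G A C) (hBC : Anticomplete G B C)
    -- `G` has no cycle of length 4
    (hC4 : ∀ a b c d : V, a ≠ c → b ≠ d →
      G.Adj a b → G.Adj b c → G.Adj c d → G.Adj d a → False)
    -- `G''` adds all edges between `X` and `Y`
    (hXYcomplete : ∀ u ∈ X, ∀ v ∈ Y, G''.Adj u v)
    -- in `G''`, `X` and `Y` remain independent
    (hXindep : IndepIn G'' X) (hYindep : IndepIn G'' Y)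
    -- exclusion property: a vertex of one class of `{A, B, C}` is adjacent in `G''`
    -- to at least one of any two distinct vertices of another class
    (hexcl : ∀ u₁ u₂ u₃ : V, u₁ ≠ u₂ → SameClass A B C u₁ u₂ →
      u₃ ∈ A ∪ B ∪ C → ¬ SameClass A B C u₃ u₁ →
      (G''.Adj u₃ u₁ ∨ G''.Adj u₃ u₂))
    -- each class of `{A, B, C}` is independent in `G''`
    (hAindep : IndepIn G'' A) (hBindep : IndepIn G'' B) (hCindep : IndepIn G'' C)
    -- each vertex of `A ∪ B ∪ C` has at most one `G''`-neighbour in `X` and in `Y`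
    (hdeg : ∀ v ∈ A ∪ B ∪ C,
      (G''.neighborSet v ∩ X).Subsingleton ∧ (G''.neighborSet v ∩ Y).Subsingleton)
    -- the edges of `G''` between `X ∪ Y` and `A ∪ B ∪ C` are exactly those of `G`
    (hcrossG : ∀ u ∈ X ∪ Y, ∀ v ∈ A ∪ B ∪ C, (G''.Adj u v ↔ G.Adj u v))
    -- in any induced copy of `P₃ + P₂` in `G''`, the middle vertex of the `P₃` lies in
    -- `X ∪ Y` and at least one endpoint of the `P₃` lies in `X ∪ Y`
    (hP3P2 : ∀ f : Fin 5 → V,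
      IsInducedPattern G'' ({s(0, 1), s(1, 2), s(3, 4)} : Set (Sym2 (Fin 5))) f →
      f 1 ∈ X ∪ Y ∧ (f 0 ∈ X ∪ Y ∨ f 2 ∈ X ∪ Y)) :
    -- `G''` has no induced copy of `2P₃ + P₂`
    ¬ ∃ f : Fin 8 → V, IsInducedPattern G''
      ({s(0, 1), s(1, 2), s(3, 4), s(5, 6), s(6, 7)} : Set (Sym2 (Fin 8))) f := by
  rintro ⟨f, hinj, hadj⟩
  have key : ∀ g : Fin 5 → Fin 8, Function.Injective g →
      (∀ i j : Fin 5,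
        ((s(g i, g j) ∈ ({s(0, 1), s(1, 2), s(3, 4), s(5, 6), s(6, 7)} :
            Set (Sym2 (Fin 8)))) ↔
          s(i, j) ∈ ({s(0, 1), s(1, 2), s(3, 4)} : Set (Sym2 (Fin 5))))) →
      IsInducedPattern G'' ({s(0, 1), s(1, 2), s(3, 4)} : Set (Sym2 (Fin 5)))
        (f ∘ g) := by
    intro g hg htrans
    exact ⟨hinj.comp hg, fun i j => (hadj (g i) (g j)).trans (htrans i j)⟩
  have h1 := hP3P2 _ (key ![0, 1, 2, 3, 4] (by decide)
    (by simp only [Set.mem_insert_iff, Set.mem_singleton_iff]; decide))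
  have h2 := hP3P2 _ (key ![5, 6, 7, 3, 4] (by decide)
    (by simp only [Set.mem_insert_iff, Set.mem_singleton_iff]; decide))
  simp only [Function.comp_apply, Matrix.cons_val_zero, Matrix.cons_val_one,
    Matrix.head_cons, Matrix.cons_val_two, Matrix.tail_cons] at h1 h2
  obtain ⟨hm, he⟩ := h1
  obtain ⟨h6, -⟩ := h2
  have a01 : G''.Adj (f 0) (f 1) := (hadj 0 1).mpr (by left; rfl)
  have a12 : G''.Adj (f 1) (f 2) := (hadj 1 2).mpr (by right; left; rfl)
  have nadj : ∀ i : Fin 8, i = 0 ∨ i = 1 ∨ i = 2 → ¬ G''.Adj (f 6) (f i) := by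
    intro i hi h
    have := (hadj 6 i).mp h
    simp only [Set.mem_insert_iff, Set.mem_singleton_iff] at this
    rcases hi with rfl | rfl | rfl <;> revert this <;> decide
  have main : ∀ u v : V, u ∈ X ∪ Y → v ∈ X ∪ Y → G''.Adj u v →
      ¬ G''.Adj (f 6) u → ¬ G''.Adj (f 6) v → f 6 ∉ X ∪ Y := by
    intro u v hu hv huv h6u h6v h6mem
    rcases hu with hux | huy
    · rcases hv with hvx | hvy
      · exact hXindep u hux v hvx huv
      · rcases h6mem with h6x | h6y
        · exact h6v (hXYcomplete _ h6x _ hvy)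
        · exact h6u ((hXYcomplete _ hux _ h6y).symm)
    · rcases hv with hvx | hvy
      · rcases h6mem with h6x | h6y
        · exact h6u (hXYcomplete _ h6x _ huy)
        · exact h6v ((hXYcomplete _ hvx _ h6y).symm)
      · exact hYindep u huy v hvy huv
  rcases he with h0 | h2'
  · exact main (f 1) (f 0) hm h0 a01.symm (nadj 1 (by decide)) (nadj 0 (by decide)) h6
  · exact main (f 1) (f 2) hm h2' a12 (nadj 1 (by decide)) (nadj 2 (by decide)) h6
end
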